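/- On the elliptic curve E : y² = x³ + 10081·x over ℚ (where 10081 = 17·593), the point P = (1088, 36040) is a rational point of infinite order: nP ≠ O for every nonzero integer n. -/

import Mathlib

open WeierstrassCurve WeierstrassCurve.Affine

/-- The elliptic curve `y² = x³ + 10081x` over `ℚ`, where `10081 = 17 · 593`. -/
def E16 : WeierstrassCurve ℚ := ⟨0, 0, 0, 10081, 0⟩

private lemma valodd16 {n : ℕ} (hn : ¬ 2 ∣ n) : padicValRat 2 (n : ℚ) = 0 := by
  rw [padicValRat.of_nat]
  simp [padicValNat.eq_zero_of_not_dvd hn]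

private lemma val2two : padicValRat 2 (2 : ℚ) = 1 := by
  have := padicValRat.self (p := 2) (by norm_num)
  exact_mod_cast this

/-- Doubling a point whose x-coordinate has negative 2-adic valuation
decreases that valuation by exactly 2. -/
private lemma step16 {x y : ℚ} (h : E16.toAffine.Nonsingular x y) (hx : x ≠ 0)
    (hv : padicValRat 2 x < 0) :
    ∃ (x' y' : ℚ) (h' : E16.toAffine.Nonsingular x' y'),
      Point.some _ _ h + Point.some _ _ h = Point.some _ _ h' ∧ x' ≠ 0 ∧
      padicValRat 2 x' = padicValRat 2 x - 2 := by
  have heq : y ^ 2 = x ^ 3 + 10081 * x := by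
    have := h.1
    rw [equation_iff] at this
    simpa [E16] using this
  have hx2pos : (0:ℚ) < x ^ 2 + 10081 := by positivity
  have hy : y ≠ 0 := by
    intro h0
    have : x * (x ^ 2 + 10081) = 0 := by rw [h0] at heq; linarith [heq]
    rcases mul_eq_zero.mp this with h1 | h1
    · exact hx h1
    · linarith
  have hnegY : E16.toAffine.negY x y = -y := by simp [negY, E16]
  have hYne : y ≠ E16.toAffine.negY x y := by
    rw [hnegY]; intro h0; apply hy; linarith
  have h2y : (2 : ℚ) * y ≠ 0 := by simp [hy]
  -- x-coordinate of the doubled point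
  have hxeq : E16.toAffine.addX x x (E16.toAffine.slope x x y y)
      = ((x ^ 2 - 10081) / (2 * y)) ^ 2 := by
    rw [slope_of_Y_ne rfl hYne, hnegY]
    show ((3 * x ^ 2 + 2 * E16.toAffine.a₂ * x + E16.toAffine.a₄ - E16.toAffine.a₁ * y)
        / (y - -y)) ^ 2 + E16.toAffine.a₁ * _ - E16.toAffine.a₂ - x - x = _
    have ha1 : E16.toAffine.a₁ = 0 := rfl
    have ha2 : E16.toAffine.a₂ = 0 := rfl
    have ha4 : E16.toAffine.a₄ = 10081 := rfl
    rw [ha1, ha2, ha4, show y - -y = 2*y from by ring]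
    field_simp
    ring_nf
    linear_combination (-8 * x) * heq
  -- valuations
  have hA : padicValRat 2 (10081 : ℚ) = 0 := by
    have := valodd16 (n := 10081) (by norm_num); exact_mod_cast this
  have hx2 : x ^ 2 ≠ 0 := pow_ne_zero 2 hx
  have hvx2 : padicValRat 2 (x ^ 2) = 2 * padicValRat 2 x := by
    rw [padicValRat.pow (p := 2) x]; push_cast; ring
  have hnum_ne : x ^ 2 - 10081 ≠ 0 := by
    intro h0
    have hxx : x ^ 2 = (10081 : ℚ) := by linarith
    rw [hxx, hA] at hvx2; linarith
  have hvnum : padicValRat 2 (x ^ 2 - 10081) = 2 * padicValRat 2 x := by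
    rw [sub_eq_add_neg, padicValRat.add_eq_of_lt (by rwa [← sub_eq_add_neg]) hx2
      (by norm_num) (by rw [padicValRat.neg, hA, hvx2]; linarith), hvx2]
  have hvsum : padicValRat 2 (x ^ 2 + 10081) = 2 * padicValRat 2 x := by
    rw [padicValRat.add_eq_of_lt (by positivity) hx2 (by norm_num)
      (by rw [hA, hvx2]; linarith), hvx2]
  have hvy : 2 * padicValRat 2 y = 3 * padicValRat 2 x := by
    have h1 : y ^ 2 = x * (x ^ 2 + 10081) := by linarith
    have h2 : padicValRat 2 (y ^ 2) = 2 * padicValRat 2 y := by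
      rw [padicValRat.pow (p := 2) y]; push_cast; ring
    rw [h1, padicValRat.mul (p := 2) hx (by positivity), hvsum] at h2
    linarith
  have hv2y : padicValRat 2 (2 * y) = 1 + padicValRat 2 y := by
    rw [padicValRat.mul (p := 2) (by norm_num) hy, val2two]
  have hu : (x ^ 2 - 10081) / (2 * y) ≠ 0 := div_ne_zero hnum_ne h2y
  refine ⟨_, _, nonsingular_add h h fun hxy => hYne hxy.2, Point.add_self_of_Y_ne hYne, ?_, ?_⟩
  · rw [hxeq]; exact pow_ne_zero 2 hu
  · rw [hxeq, padicValRat.pow (p := 2) ((x ^ 2 - 10081) / (2 * y)), padicValRat.div (p := 2) hnum_ne h2y,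
      hvnum, hv2y]
    push_cast
    linarith
private lemma iter16 : ∀ (k : ℕ) {x y : ℚ} (h : E16.toAffine.Nonsingular x y),
    x ≠ 0 → padicValRat 2 x < 0 →
    ∃ (x' y' : ℚ) (h' : E16.toAffine.Nonsingular x' y'),
      (2 ^ k : ℕ) • (Point.some _ _ h) = Point.some _ _ h' ∧ x' ≠ 0 ∧
      padicValRat 2 x' = padicValRat 2 x - 2 * k := by
  intro k
  induction k with
  | zero =>
    intro x y h hx hv
    exact ⟨x, y, h, by simp, hx, by simp⟩
  | succ k ih =>
    intro x y h hx hv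
    obtain ⟨x', y', h', hadd, hx', hv'⟩ := step16 h hx hv
    obtain ⟨x'', y'', h'', hsm, hx'', hv''⟩ := ih h' hx' (by rw [hv']; linarith)
    refine ⟨x'', y'', h'', ?_, hx'', ?_⟩
    · rw [pow_succ, mul_smul, two_smul, hadd, hsm]
    · rw [hv'', hv']; push_cast; ring

theorem stmt16 :
    ∃ h : E16.toAffine.Nonsingular 1088 36040,
      ∀ n : ℤ, n ≠ 0 → n • (WeierstrassCurve.Affine.Point.some _ _ h) ≠ 0 := by
  have hP : E16.toAffine.Nonsingular 1088 36040 := by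
    rw [nonsingular_iff, equation_iff]
    norm_num [E16]
  refine ⟨hP, ?_⟩
  intro n hn hEq
  set P : Point E16.toAffine := Point.some _ _ hP with hPdef
  -- natural number torsion order
  set N : ℕ := n.natAbs with hNdef
  have hNpos : 0 < N := Int.natAbs_pos.mpr hn
  have hNsm : N • P = 0 := by
    rcases Int.natAbs_eq n with h | h
    · have : ((N : ℤ)) • P = 0 := by rw [← h]; exact hEq
      rwa [natCast_zsmul] at this
    · have : ((N : ℤ)) • P = 0 := by
        rw [show ((N : ℤ)) = -n from by rw [h]; ring, neg_zsmul, hEq, neg_zero]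
      rwa [natCast_zsmul] at this
  -- double P: compute 2P explicitly
  have hYneP : (36040 : ℚ) ≠ E16.toAffine.negY 1088 36040 := by
    simp [negY, E16]; norm_num
  have h2P := Point.add_self_of_Y_ne (h₁ := hP) hYneP
  let x0 : ℚ := E16.toAffine.addX 1088 1088 (E16.toAffine.slope 1088 1088 36040 36040)
  have hx0def : x0 = E16.toAffine.addX 1088 1088 (E16.toAffine.slope 1088 1088 36040 36040) := rfl
  have hx0eq : x0 = (69039 : ℚ) ^ 2 / ((265 : ℚ) ^ 2 * 2 ^ 8) := by
    rw [hx0def, slope_of_Y_ne rfl hYneP]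
    show ((3 * 1088 ^ 2 + 2 * E16.toAffine.a₂ * 1088 + E16.toAffine.a₄
        - E16.toAffine.a₁ * 36040) / ((36040 : ℚ) - E16.toAffine.negY 1088 36040)) ^ 2
        + E16.toAffine.a₁ * _ - E16.toAffine.a₂ - 1088 - 1088 = _
    have ha1 : E16.toAffine.a₁ = 0 := rfl
    have ha2 : E16.toAffine.a₂ = 0 := rfl
    have ha4 : E16.toAffine.a₄ = 10081 := rfl
    have hnegY : E16.toAffine.negY 1088 36040 = -36040 := by simp [negY, E16]
    simp only [ha1, ha2, ha4, hnegY]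
    norm_num
  have hx0ne : x0 ≠ 0 := by rw [hx0eq]; norm_num
  have hvx0 : padicValRat 2 x0 = -8 := by
    rw [hx0eq, padicValRat.div (p := 2) (by norm_num) (by norm_num),
      padicValRat.mul (p := 2) (by norm_num) (by norm_num),
      padicValRat.pow (p := 2) (q := (69039:ℚ)),
      padicValRat.pow (p := 2) (q := (265:ℚ)),
      padicValRat.pow (p := 2) (q := (2:ℚ)), val2two]
    have h1 : padicValRat 2 ((69039 : ℕ) : ℚ) = 0 := valodd16 (by norm_num)
    have h2 : padicValRat 2 ((265 : ℕ) : ℚ) = 0 := valodd16 (by norm_num)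
    norm_num at h1 h2
    norm_num [h1, h2]
  have hvx0neg : padicValRat 2 x0 < 0 := by rw [hvx0]; norm_num
  -- Q := 2P
  set h0 : E16.toAffine.Nonsingular x0 _ := nonsingular_add hP hP fun hxy => hYneP hxy.2 with h0def
  set Q : Point E16.toAffine := Point.some _ _ h0 with hQdef
  have hQ : P + P = Q := h2P
  have hNQ : N • Q = 0 := by
    rw [← hQ, ← two_smul ℕ P, ← mul_smul, mul_comm, mul_smul, hNsm, nsmul_zero]
  -- multiples of Q depend only on exponent mod N
  have hmod : ∀ m : ℕ, m • Q = (m % N) • Q := by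
    intro m
    conv_lhs => rw [← Nat.div_add_mod m N]
    rw [add_smul, mul_comm, mul_smul, hNQ, nsmul_zero, zero_add]
  -- pigeonhole on k ↦ 2^k % N
  obtain ⟨i, j, hne, hij⟩ := Finite.exists_ne_map_eq_of_infinite
    (fun k : ℕ => (⟨2 ^ k % N, Nat.mod_lt _ hNpos⟩ : Fin N))
  have hij' : 2 ^ i % N = 2 ^ j % N := by simpa using hij
  have hsame : (2 ^ i) • Q = (2 ^ j) • Q := by
    rw [hmod (2 ^ i), hmod (2 ^ j), hij']
  -- but iter16 shows these are distinct points
  obtain ⟨xi, yi, hi, hsmi, hxi, hvi⟩ := iter16 i h0 hx0ne hvx0neg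
  obtain ⟨xj, yj, hj, hsmj, hxj, hvj⟩ := iter16 j h0 hx0ne hvx0neg
  rw [← hQdef] at hsmi hsmj
  rw [hsmi, hsmj] at hsame
  have hxixj : xi = xj := by
    injection hsame
  have : padicValRat 2 xi = padicValRat 2 xj := by rw [hxixj]
  rw [hvi, hvj] at this
  have : (i : ℤ) = j := by linarith
  exact hne (by exact_mod_cast this)
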